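/- Suppose λ_j ∈ ℂ is a common root of the two equations (2λ − 4) U_n(θ) = (2λ + 4) i U_{n−1}(θ) and its λ-derivative (with θ = −iλ), obtained from the characteristic equation of the (n+1)×(n+1) time-discretization matrix. Then (−(4 + 8n) λ_j³ − 12 λ_j²) · U_{n−1}(θ_j) = 0; consequently, if λ_j is not real and λ_j ≠ 0, then U_{n−1}(θ_j) = 0. -/
import Mathlib


open Polynomial Polynomial.Chebyshev Complex

/-- If `λ` is a common root of the characteristic equation
`(2λ - 4) T_n(θ) = (2λ² - 2λ + 4) i U_{n-1}(θ)` (with `θ = -iλ`) and of its λ-derivative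
`(λ²+1)[4λ-2+n(2λ-4)] i U_{n-1}(θ) - 2(λ²+1) T_n(θ) - n(2λ²-2λ+4) T_n(θ)
  - iλ(2λ²-2λ+4) U_{n-1}(θ) = 0`, then
`(-(4+8n) λ³ - 12 λ²) U_{n-1}(θ) = 0`; consequently, if `λ` is not real and `λ ≠ 0`,
then `U_{n-1}(θ) = 0`. -/
theorem multiple_root_consequence (n : ℕ) (lam θ : ℂ) (hθ : θ = -I * lam)
    (h1 : (2 * lam - 4) * (T ℂ n).eval θ
        = (2 * lam ^ 2 - 2 * lam + 4) * I * (U ℂ ((n : ℤ) - 1)).eval θ)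
    (h2 : (lam ^ 2 + 1) * (4 * lam - 2 + n * (2 * lam - 4)) * I
            * (U ℂ ((n : ℤ) - 1)).eval θ
        - 2 * (lam ^ 2 + 1) * (T ℂ n).eval θ
        - n * (2 * lam ^ 2 - 2 * lam + 4) * (T ℂ n).eval θ
        - I * lam * (2 * lam ^ 2 - 2 * lam + 4) * (U ℂ ((n : ℤ) - 1)).eval θ = 0) :
    (-(4 + 8 * n) * lam ^ 3 - 12 * lam ^ 2) * (U ℂ ((n : ℤ) - 1)).eval θ = 0 ∧
    (lam.im ≠ 0 → lam ≠ 0 → (U ℂ ((n : ℤ) - 1)).eval θ = 0) := by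
  constructor
  · linear_combination (-I * (2*lam - 4)) * h2
      + (I * (-(2*(lam^2+1) + (n:ℂ)*(2*lam^2 - 2*lam + 4)))) * h1
      + ((-8*(n:ℂ)*lam^3 - 4*lam^3 - 12*lam^2) * (U ℂ ((n : ℤ) - 1)).eval θ) * Complex.I_sq
  · intro him hne
    have key : (-(4 + 8 * n) * lam ^ 3 - 12 * lam ^ 2) * (U ℂ ((n : ℤ) - 1)).eval θ = 0 := by
      linear_combination (-I * (2*lam - 4)) * h2
        + (I * (-(2*(lam^2+1) + (n:ℂ)*(2*lam^2 - 2*lam + 4)))) * h1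
        + ((-8*(n:ℂ)*lam^3 - 4*lam^3 - 12*lam^2) * (U ℂ ((n : ℤ) - 1)).eval θ) * Complex.I_sq
    have hc : (-(4 + 8 * (n:ℂ)) * lam ^ 3 - 12 * lam ^ 2) ≠ 0 := by
      have hfac : (-(4 + 8 * (n:ℂ)) * lam ^ 3 - 12 * lam ^ 2)
          = -(lam^2) * ((4 + 8 * (n:ℂ)) * lam + 12) := by ring
      rw [hfac]
      apply mul_ne_zero
      · simpa using pow_ne_zero 2 hne
      · intro h
        have : ((4 + 8 * (n:ℂ)) * lam + 12).im = 0 := by rw [h]; simp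
        simp [Complex.add_im, Complex.mul_im] at this
        rcases this with h' | h'
        · have h'' : (4:ℝ) + 8 * n = 0 := by exact_mod_cast h'
          have hp : (0:ℝ) < 4 + 8 * n := by positivity
          linarith
        · exact him h' 
    exact (mul_eq_zero.mp key).resolve_left hc
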